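/- For every σ ∈ ℝ^n_+ and every τ ∈ ℝ^n, each entry of 𝓕 is differentiable at σ with directional derivative (d/dt)|_{t=0} 𝓕_{j,k}(σ + tτ) = −Σ_{i=1}^n τ_i b_i(u_σ^{l_j}, u_σ^{l_k}); consequently, if τ ≥ 0 (elementwise), then the matrix 𝓕'(σ)τ := ((d/dt)|_{t=0} 𝓕_{j,k}(σ + tτ))_{j,k=1}^m is negative semidefinite. -/
import Mathlib


open scoped BigOperators

/-- For every `σ ∈ ℝ^n_+` and every `τ ∈ ℝ^n`, each entry of `𝓕`
is differentiable at `σ` with directional derivative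
`(d/dt)|_{t=0} 𝓕_{j,k}(σ + tτ) = −Σ_i τ_i b_i(u_σ^{l_j}, u_σ^{l_k})`;
consequently, if `τ ≥ 0` (elementwise), then the matrix
`𝓕'(σ)τ := ((d/dt)|_{t=0} 𝓕_{j,k}(σ + tτ))_{j,k}` is negative semidefinite. -/
theorem stmt_10
    {H : Type*} [NormedAddCommGroup H] [InnerProductSpace ℝ H] [CompleteSpace H]
    {n m : ℕ}
    (b0 : H →L[ℝ] H →L[ℝ] ℝ) (b : Fin n → H →L[ℝ] H →L[ℝ] ℝ)
    (hb0symm : ∀ u v : H, b0 u v = b0 v u)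
    (hb0pos : ∀ v : H, 0 ≤ b0 v v)
    (hbsymm : ∀ i, ∀ u v : H, b i u v = b i v u)
    (hbpos : ∀ i, ∀ v : H, 0 ≤ b i v v)
    (C β : ℝ) (hβ : 0 < β) (hCβ : β ≤ C)
    (hcoer : ∀ v : H, β * ‖v‖ ^ 2 ≤ b0 v v + ∑ i, b i v v)
    (hbound : ∀ v : H, b0 v v + ∑ i, b i v v ≤ C * ‖v‖ ^ 2)
    (u : (Fin n → ℝ) → (H →L[ℝ] ℝ) → H)
    (hu : ∀ σ : Fin n → ℝ, (∀ i, 0 < σ i) → ∀ l : H →L[ℝ] ℝ,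
      ∀ v : H, b0 (u σ l) v + ∑ i, σ i * b i (u σ l) v = l v)
    (l : Fin m → (H →L[ℝ] ℝ)) :
    ∀ σ : Fin n → ℝ, (∀ i, 0 < σ i) → ∀ τ : Fin n → ℝ,
      (∀ j k : Fin m,
        HasDerivAt (fun t : ℝ => l k (u (σ + t • τ) (l j)))
          (-(∑ i, τ i * b i (u σ (l j)) (u σ (l k)))) 0) ∧
      ((∀ i, 0 ≤ τ i) →
        ∀ g : Fin m → ℝ,
          ∑ j, ∑ k, g j * (-(∑ i, τ i * b i (u σ (l j)) (u σ (l k)))) * g k ≤ 0) := by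
  classical
  intro σ hσ τ
  -- a uniform positive lower bound α on the entries of σ, with α ≤ 1
  obtain ⟨α, hαpos, hα1, hασ⟩ : ∃ α : ℝ, 0 < α ∧ α ≤ 1 ∧ ∀ i, α ≤ σ i := by
    refine ⟨(insert (1:ℝ) (Finset.image σ Finset.univ)).min'
      ⟨1, Finset.mem_insert_self _ _⟩, ?_, ?_, ?_⟩
    · have hmem := Finset.min'_mem (insert (1:ℝ) (Finset.image σ Finset.univ))
        ⟨1, Finset.mem_insert_self _ _⟩
      rcases Finset.mem_insert.mp hmem with h | h
      · rw [h]; norm_num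
      · obtain ⟨i, -, hi⟩ := Finset.mem_image.mp h
        rw [← hi]; exact hσ i
    · exact Finset.min'_le _ _ (Finset.mem_insert_self _ _)
    · exact fun i => Finset.min'_le _ _
        (Finset.mem_insert_of_mem (Finset.mem_image_of_mem σ (Finset.mem_univ i)))
  set c : ℝ := α / 2 * β with hc_def
  have hcpos : 0 < c := mul_pos (by linarith) hβ
  set K : ℝ := ∑ i, |τ i| * ‖b i‖ with hK_def
  have hKnn : 0 ≤ K :=
    Finset.sum_nonneg fun i _ => mul_nonneg (abs_nonneg _) (ContinuousLinearMap.opNorm_nonneg _)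
  set Bt : ℝ → H → H → ℝ := fun t x y => b0 x y + ∑ i, (σ i + t * τ i) * b i x y
    with hBt_def
  -- the perturbed variational identity
  have hper : ∀ t : ℝ, (∀ i, 0 < σ i + t * τ i) →
      ∀ l' : H →L[ℝ] ℝ, ∀ v : H, Bt t (u (σ + t • τ) l') v = l' v := by
    intro t ht l' v
    have h := hu (σ + t • τ)
      (fun i => by simpa [Pi.add_apply, Pi.smul_apply, smul_eq_mul] using ht i) l' v
    simpa [hBt_def, Pi.add_apply, Pi.smul_apply, smul_eq_mul] using h
  have hexp : ∀ t : ℝ, ∀ x v : H,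
      Bt t x v = (b0 x v + ∑ i, σ i * b i x v) + t * ∑ i, τ i * b i x v := by
    intro t x v
    simp only [hBt_def]
    rw [Finset.sum_congr rfl
      (fun i _ => show (σ i + t * τ i) * b i x v
        = σ i * b i x v + t * (τ i * b i x v) by ring),
      Finset.sum_add_distrib, Finset.mul_sum]
    ring
  have hBtsymm : ∀ t : ℝ, ∀ x y : H, Bt t x y = Bt t y x := by
    intro t x y
    simp only [hBt_def, hb0symm x y]
    congr 1
    exact Finset.sum_congr rfl fun i _ => by rw [hbsymm i x y]
  have hBtsub : ∀ t : ℝ, ∀ x x' v : H, Bt t (x - x') v = Bt t x v - Bt t x' v := by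
    intro t x x' v
    simp only [hBt_def, map_sub, ContinuousLinearMap.sub_apply, mul_sub]
    rw [Finset.sum_sub_distrib]
    ring
  have hpos_of : ∀ t : ℝ, (∀ i, α / 2 ≤ σ i + t * τ i) → ∀ i, 0 < σ i + t * τ i :=
    fun t ht i => lt_of_lt_of_le (by linarith) (ht i)
  have hdiffid : ∀ t : ℝ, (∀ i, 0 < σ i + t * τ i) → ∀ l' : H →L[ℝ] ℝ, ∀ v : H,
      Bt t (u (σ + t • τ) l' - u σ l') v = -(t * ∑ i, τ i * b i (u σ l') v) := by
    intro t ht l' v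
    rw [hBtsub, hper t ht l' v, hexp, hu σ hσ l' v]
    ring
  have hcoerBt : ∀ t : ℝ, (∀ i, α / 2 ≤ σ i + t * τ i) → ∀ v : H,
      c * ‖v‖ ^ 2 ≤ Bt t v v := by
    intro t ht v
    have h1 : α / 2 * (b0 v v + ∑ i, b i v v) ≤ Bt t v v := by
      simp only [hBt_def, mul_add, Finset.mul_sum]
      have hb0' : α / 2 * b0 v v ≤ b0 v v := by nlinarith [hb0pos v]
      exact add_le_add hb0' (Finset.sum_le_sum fun i _ =>
        mul_le_mul_of_nonneg_right (ht i) (hbpos i v))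
    calc c * ‖v‖ ^ 2 = α / 2 * (β * ‖v‖ ^ 2) := by rw [hc_def]; ring
      _ ≤ α / 2 * (b0 v v + ∑ i, b i v v) :=
          mul_le_mul_of_nonneg_left (hcoer v) (by linarith)
      _ ≤ Bt t v v := h1
  have habs : ∀ x v : H, |∑ i, τ i * b i x v| ≤ K * ‖x‖ * ‖v‖ := by
    intro x v
    calc |∑ i, τ i * b i x v| ≤ ∑ i, |τ i * b i x v| := Finset.abs_sum_le_sum_abs _ _
      _ ≤ ∑ i, |τ i| * ‖b i‖ * ‖x‖ * ‖v‖ := by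
          refine Finset.sum_le_sum fun i _ => ?_
          rw [abs_mul]
          have h2 : |b i x v| ≤ ‖b i‖ * ‖x‖ * ‖v‖ := by
            have := (b i).le_opNorm₂ x v
            simpa [Real.norm_eq_abs] using this
          calc |τ i| * |b i x v| ≤ |τ i| * (‖b i‖ * ‖x‖ * ‖v‖) :=
              mul_le_mul_of_nonneg_left h2 (abs_nonneg _)
            _ = |τ i| * ‖b i‖ * ‖x‖ * ‖v‖ := by ring
      _ = K * ‖x‖ * ‖v‖ := by rw [hK_def, ← Finset.sum_mul, ← Finset.sum_mul]
  have hLip : ∀ t : ℝ, (∀ i, α / 2 ≤ σ i + t * τ i) → ∀ l' : H →L[ℝ] ℝ,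
      ‖u (σ + t • τ) l' - u σ l'‖ ≤ |t| * (K * ‖u σ l'‖) / c := by
    intro t ht l'
    set d : H := u (σ + t • τ) l' - u σ l' with hd_def
    have h1 : c * ‖d‖ ^ 2 ≤ Bt t d d := hcoerBt t ht d
    have h2 : Bt t d d = -(t * ∑ i, τ i * b i (u σ l') d) := hdiffid t (hpos_of t ht) l' d
    have h3 : Bt t d d ≤ |t| * (K * ‖u σ l'‖) * ‖d‖ := by
      rw [h2]
      calc -(t * ∑ i, τ i * b i (u σ l') d) ≤ |t * ∑ i, τ i * b i (u σ l') d| :=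
          neg_le_abs _
        _ = |t| * |∑ i, τ i * b i (u σ l') d| := abs_mul _ _
        _ ≤ |t| * (K * ‖u σ l'‖ * ‖d‖) := by
            refine mul_le_mul_of_nonneg_left ?_ (abs_nonneg t)
            simpa [mul_assoc] using habs (u σ l') d
        _ = |t| * (K * ‖u σ l'‖) * ‖d‖ := by ring
    rcases eq_or_lt_of_le (norm_nonneg d) with h0 | h0
    · rw [← h0]
      exact div_nonneg (mul_nonneg (abs_nonneg t)
        (mul_nonneg hKnn (norm_nonneg _))) hcpos.le
    · rw [le_div_iff₀ hcpos]
      nlinarith [le_trans h1 h3]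
  have hev : ∀ᶠ t : ℝ in nhds 0, ∀ i, α / 2 ≤ σ i + t * τ i := by
    rw [Filter.eventually_all]
    intro i
    have hc : ContinuousAt (fun t : ℝ => σ i + t * τ i) 0 := by fun_prop
    have hlt : α / 2 < σ i + 0 * τ i := by
      have := hασ i
      simp only [zero_mul, add_zero]
      linarith
    exact hc.eventually (eventually_ge_nhds hlt)
  constructor
  · intro j k
    set D : ℝ := -(∑ i, τ i * b i (u σ (l j)) (u σ (l k))) with hD_def
    set M : ℝ := K * ‖u σ (l j)‖ * (K * ‖u σ (l k)‖ / c) with hM_def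
    have hMnn : 0 ≤ M :=
      mul_nonneg (mul_nonneg hKnn (norm_nonneg _))
        (div_nonneg (mul_nonneg hKnn (norm_nonneg _)) hcpos.le)
    have hmain : ∀ᶠ t : ℝ in nhds 0,
        |l k (u (σ + t • τ) (l j)) - l k (u σ (l j)) - t * D| ≤ M * (|t| * |t|) := by
      filter_upwards [hev] with t ht
      have htpos := hpos_of t ht
      have e1 : Bt t (u (σ + t • τ) (l k)) (u (σ + t • τ) (l j) - u σ (l j))
          = l k (u (σ + t • τ) (l j)) - l k (u σ (l j)) := by
        rw [hper t htpos (l k), map_sub]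
      have e2 : Bt t (u (σ + t • τ) (l k)) (u (σ + t • τ) (l j) - u σ (l j))
          = -(t * ∑ i, τ i * b i (u σ (l j)) (u (σ + t • τ) (l k))) := by
        rw [hBtsymm]; exact hdiffid t htpos (l j) _
      have hsplit : (∑ i, τ i * b i (u σ (l j)) (u (σ + t • τ) (l k) - u σ (l k)))
          = (∑ i, τ i * b i (u σ (l j)) (u (σ + t • τ) (l k)))
            - ∑ i, τ i * b i (u σ (l j)) (u σ (l k)) := by
        rw [← Finset.sum_sub_distrib]
        exact Finset.sum_congr rfl fun i _ => by rw [map_sub]; ring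
      have e3 : l k (u (σ + t • τ) (l j)) - l k (u σ (l j)) - t * D
          = -(t * ∑ i, τ i * b i (u σ (l j)) (u (σ + t • τ) (l k) - u σ (l k))) := by
        rw [← e1, e2, hsplit, hD_def]
        ring
      rw [e3]
      have h4 : |∑ i, τ i * b i (u σ (l j)) (u (σ + t • τ) (l k) - u σ (l k))|
          ≤ K * ‖u σ (l j)‖ * (|t| * (K * ‖u σ (l k)‖) / c) := by
        refine le_trans (habs _ _) ?_
        exact mul_le_mul_of_nonneg_left (hLip t ht (l k))
          (mul_nonneg hKnn (norm_nonneg (u σ (l j))))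
      calc |(-(t * ∑ i, τ i * b i (u σ (l j)) (u (σ + t • τ) (l k) - u σ (l k))))|
          = |t| * |∑ i, τ i * b i (u σ (l j)) (u (σ + t • τ) (l k) - u σ (l k))| := by
            rw [abs_neg, abs_mul]
        _ ≤ |t| * (K * ‖u σ (l j)‖ * (|t| * (K * ‖u σ (l k)‖) / c)) :=
            mul_le_mul_of_nonneg_left h4 (abs_nonneg t)
        _ = M * (|t| * |t|) := by rw [hM_def]; ring
    rw [hasDerivAt_iff_isLittleO, Asymptotics.isLittleO_iff]
    intro ε hε
    have hsm : ∀ᶠ t : ℝ in nhds 0, |t| ≤ ε / (M + 1) := by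
      have h1 : (0:ℝ) < ε / (M + 1) := div_pos hε (by linarith)
      filter_upwards [eventually_abs_sub_lt (0:ℝ) h1] with t ht
      rw [sub_zero] at ht
      exact ht.le
    filter_upwards [hmain, hsm] with t h1 h2
    simp only [sub_zero, smul_eq_mul, Real.norm_eq_abs, zero_smul, add_zero]
    have h2' : |t| * (M + 1) ≤ ε := (le_div_iff₀ (by linarith : (0:ℝ) < M + 1)).mp h2
    calc |l k (u (σ + t • τ) (l j)) - l k (u σ (l j)) - t * D| ≤ M * (|t| * |t|) := h1
      _ ≤ ε * |t| := by nlinarith [abs_nonneg t, mul_le_mul_of_nonneg_right h2' (abs_nonneg t)]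
  · intro hτ g
    have hrw : ∀ i : Fin n,
        b i (∑ j, g j • u σ (l j)) (∑ k, g k • u σ (l k))
          = ∑ j, ∑ k, g j * g k * b i (u σ (l j)) (u σ (l k)) := by
      intro i
      simp only [map_sum, ContinuousLinearMap.sum_apply, map_smul,
        ContinuousLinearMap.smul_apply, smul_eq_mul, Finset.mul_sum]
      refine Finset.sum_congr rfl fun j _ => Finset.sum_congr rfl fun k _ => ?_
      rw [hbsymm i (u σ (l k)) (u σ (l j)), mul_assoc]
    have hterm : ∀ j k : Fin m,
        g j * (-(∑ i, τ i * b i (u σ (l j)) (u σ (l k)))) * g k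
          = ∑ i, -(τ i * (g j * g k * b i (u σ (l j)) (u σ (l k)))) := by
      intro j k
      rw [show g j * (-(∑ i, τ i * b i (u σ (l j)) (u σ (l k)))) * g k
          = -((∑ i, τ i * b i (u σ (l j)) (u σ (l k))) * (g j * g k)) by ring,
        Finset.sum_mul, ← Finset.sum_neg_distrib]
      exact Finset.sum_congr rfl fun i _ => by ring
    calc ∑ j, ∑ k, g j * (-(∑ i, τ i * b i (u σ (l j)) (u σ (l k)))) * g k
        = ∑ i, ∑ j, ∑ k, -(τ i * (g j * g k * b i (u σ (l j)) (u σ (l k)))) := by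
          rw [Finset.sum_congr rfl fun j _ => Finset.sum_congr rfl fun k _ => hterm j k,
            Finset.sum_congr rfl fun j (_ : j ∈ Finset.univ) =>
              (Finset.sum_comm : _ = ∑ i, ∑ k, -(τ i * (g j * g k * b i (u σ (l j)) (u σ (l k))))),
            Finset.sum_comm]
      _ = ∑ i, -(τ i * b i (∑ j, g j • u σ (l j)) (∑ k, g k • u σ (l k))) := by
          refine Finset.sum_congr rfl fun i _ => ?_
          rw [hrw i, Finset.mul_sum, ← Finset.sum_neg_distrib]
          refine Finset.sum_congr rfl fun j _ => ?_
          rw [Finset.mul_sum, ← Finset.sum_neg_distrib]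
      _ ≤ 0 := Finset.sum_nonpos fun i _ => neg_nonpos.mpr
          (mul_nonneg (hτ i) (hbpos i _))
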